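/- arXiv:2204.08274 — 7 statements merged into one kernel-verified Lean document; each statement's English description precedes it below -/
import Mathlib

section
/- Let W ∈ ℝ^{m×m} be symmetric with O ⪯ W ⪯ I, let A ∈ ℝ^{m×n}, and set c = ⟨W, AAᵀ⟩⁻¹ (assuming ⟨W, AAᵀ⟩ > 0). Then the matrix W' = W - c·W A Aᵀ W satisfies O ⪯ W' ⪯ W. -/
open Matrix

private lemma psd_cauchy_schwarz {m : ℕ} {W : Matrix (Fin m) (Fin m) ℝ}
    (hW : W.PosSemidef) (hWsym : W.IsSymm) (a x : Fin m → ℝ) :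
    (a ⬝ᵥ W *ᵥ x) ^ 2 ≤ (a ⬝ᵥ W *ᵥ a) * (x ⬝ᵥ W *ᵥ x) := by
  have hsym : ∀ u v : Fin m → ℝ, u ⬝ᵥ W *ᵥ v = v ⬝ᵥ W *ᵥ u := by
    intro u v
    rw [dotProduct_mulVec, ← mulVec_transpose, hWsym.eq, dotProduct_comm]
  have key : ∀ t : ℝ, 0 ≤ (x ⬝ᵥ W *ᵥ x) * (t * t) + (2 * (a ⬝ᵥ W *ᵥ x)) * t
      + (a ⬝ᵥ W *ᵥ a) := by
    intro t
    have h := hW.dotProduct_mulVec_nonneg (a + t • x)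
    simp only [star_trivial, add_dotProduct, dotProduct_add, mulVec_add, mulVec_smul,
      smul_dotProduct, dotProduct_smul, smul_eq_mul] at h
    rw [← hsym a x] at h
    nlinarith [h]
  have hd := discrim_le_zero key
  rw [discrim] at hd
  nlinarith [hd]

/-- Let W be symmetric with O ⪯ W ⪯ I, A ∈ ℝ^{m×n}, ⟨W, AAᵀ⟩ > 0 and
    c = ⟨W, AAᵀ⟩⁻¹.  Then W' = W - c · W A Aᵀ W satisfies O ⪯ W' ⪯ W. -/
theorem weight_update_posSemidef (m n : ℕ)
    (W : Matrix (Fin m) (Fin m) ℝ) (A : Matrix (Fin m) (Fin n) ℝ)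
    (hWsym : W.IsSymm) (hW : W.PosSemidef) (hWI : (1 - W).PosSemidef)
    (hpos : 0 < (Wᵀ * (A * Aᵀ)).trace) :
    ((W - ((Wᵀ * (A * Aᵀ)).trace)⁻¹ • (W * A * Aᵀ * W)).PosSemidef) ∧
      (W - (W - ((Wᵀ * (A * Aᵀ)).trace)⁻¹ • (W * A * Aᵀ * W))).PosSemidef := by
  set T : ℝ := (Wᵀ * (A * Aᵀ)).trace with hT
  set M : Matrix (Fin m) (Fin m) ℝ := W * A * Aᵀ * W with hM
  -- M is PSD
  have hMpsd : M.PosSemidef := by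
    have h1 : (A * Aᵀ).PosSemidef := by
      rw [← conjTranspose_eq_transpose_of_trivial]
      exact posSemidef_self_mul_conjTranspose A
    have h2 := h1.mul_mul_conjTranspose_same W
    have heq : W * (A * Aᵀ) * Wᴴ = M := by
      rw [hM, conjTranspose_eq_transpose_of_trivial, hWsym.eq]
      simp [Matrix.mul_assoc]
    rwa [heq] at h2
  -- trace as a sum
  have hTsum : T = ∑ j : Fin n, (Aᵀ j) ⬝ᵥ W *ᵥ (Aᵀ j) := by
    have h1 : T = (Aᵀ * (W * A)).trace := by
      rw [hT, hWsym.eq, ← Matrix.mul_assoc, Matrix.trace_mul_comm]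
    rw [h1]
    simp [trace, diag, mul_apply, dotProduct, mulVec, Finset.mul_sum]
  -- quadratic form of M
  have hMform : ∀ x : Fin m → ℝ, x ⬝ᵥ M *ᵥ x = ∑ j : Fin n, ((Aᵀ j) ⬝ᵥ W *ᵥ x) ^ 2 := by
    intro x
    have hv : M *ᵥ x = W *ᵥ (A *ᵥ (Aᵀ *ᵥ (W *ᵥ x))) := by
      rw [hM]; simp [← mulVec_mulVec]
    rw [hv, dotProduct_mulVec x W, ← mulVec_transpose, hWsym.eq, dotProduct_mulVec _ A,
      ← mulVec_transpose]
    simp [dotProduct, mulVec, sq, Finset.mul_sum, Finset.sum_mul]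
  have hform : ∀ x : Fin m → ℝ, 0 ≤ x ⬝ᵥ (W - T⁻¹ • M) *ᵥ x := by
    intro x
    have hS : ∑ j : Fin n, ((Aᵀ j) ⬝ᵥ W *ᵥ x) ^ 2 ≤ T * (x ⬝ᵥ W *ᵥ x) := by
      rw [hTsum, Finset.sum_mul]
      exact Finset.sum_le_sum fun j _ => psd_cauchy_schwarz hW hWsym (Aᵀ j) x
    have heq : x ⬝ᵥ (W - T⁻¹ • M) *ᵥ x = x ⬝ᵥ W *ᵥ x - T⁻¹ * (x ⬝ᵥ M *ᵥ x) := by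
      simp [sub_mulVec, smul_mulVec, dotProduct_sub, dotProduct_smul]
    rw [heq, hMform, sub_nonneg, inv_mul_le_iff₀ hpos]
    exact hS
  have hsmHerm : (T⁻¹ • M).IsHermitian := by
    have := hMpsd.1
    unfold Matrix.IsHermitian at *
    rw [conjTranspose_smul, this]
    simp
  have hHerm : (W - T⁻¹ • M).IsHermitian := hW.1.sub hsmHerm
  constructor
  · exact .of_dotProduct_mulVec_nonneg hHerm (fun x => by simpa using hform x)
  · rw [sub_sub_cancel]
    refine .of_dotProduct_mulVec_nonneg hsmHerm (fun x => ?_)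
    have h := hMpsd.dotProduct_mulVec_nonneg x
    simp only [star_trivial, smul_mulVec, dotProduct_smul, smul_eq_mul] at *
    positivity
end

section
/- Let g: ℝⁿ → ℝ be differentiable, x ∈ ℝⁿ with support S (|S| = s'), η > 0, and let x̄ = x - η∇g(x). Let x' = H_{s'}(x̄) have support S' with A = S'\S (inserted indices) and B = S\S' (removed indices). Then for any sets A' ⊆ [n]\S and B' ⊆ S with |A'| = |B'|, it holds that -‖η∇_A g(x)‖₂² + ‖x̄_B‖₂² ≤ -‖η∇_{A'} g(x)‖₂² + ‖x̄_{B'}‖₂². -/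
/-- IHT exchange lemma.  Let g be differentiable, x have support S with
    |S| = s', x̄ = x - η∇g(x), and let S' (with |S'| = s') be the support of
    x' = H_{s'}(x̄), i.e. a set of s' indices of largest magnitude of x̄.
    Set A = S' \ S and B = S \ S'.  Then for any A' ⊆ Sᶜ and B' ⊆ S with
    |A'| = |B'|,
      -‖η∇_A g(x)‖₂² + ‖x̄_B‖₂² ≤ -‖η∇_{A'} g(x)‖₂² + ‖x̄_{B'}‖₂². -/
theorem iht_exchange (n : ℕ) (g : EuclideanSpace ℝ (Fin n) → ℝ)
    (hg : Differentiable ℝ g)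
    (x : EuclideanSpace ℝ (Fin n)) (η : ℝ) (hη : 0 < η)
    (s' : ℕ) (S S' : Finset (Fin n))
    (hcardS : S.card = s') (hcardS' : S'.card = s')
    (hsupp : ∀ i, x i ≠ 0 ↔ i ∈ S)
    (xbar : EuclideanSpace ℝ (Fin n))
    (hxbar : xbar = x - η • gradient g x)
    (htop : ∀ i ∈ S', ∀ j ∉ S', |xbar j| ≤ |xbar i|)
    (A B : Finset (Fin n)) (hA : A = S' \ S) (hB : B = S \ S')
    (A' B' : Finset (Fin n)) (hA' : A' ⊆ Sᶜ) (hB' : B' ⊆ S)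
    (hcard : A'.card = B'.card) :
    -(∑ i ∈ A, (η * gradient g x i) ^ 2) + ∑ i ∈ B, xbar i ^ 2 ≤
      -(∑ i ∈ A', (η * gradient g x i) ^ 2) + ∑ i ∈ B', xbar i ^ 2 := by

  -- For i ∉ S, x i = 0 and xbar i = -(η * gradient g x i)
  have hx0 : ∀ i, i ∉ S → x i = 0 := by
    intro i hi
    by_contra h
    exact hi ((hsupp i).1 h)
  have hxb : ∀ i, i ∉ S → xbar i = -(η * gradient g x i) := by
    intro i hi
    have : xbar i = x i - η * gradient g x i := by
      rw [hxbar]; rfl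
    rw [this, hx0 i hi]; ring
  -- squares agree off S
  have hsq : ∀ (T : Finset (Fin n)), (∀ i ∈ T, i ∉ S) →
      ∑ i ∈ T, (η * gradient g x i) ^ 2 = ∑ i ∈ T, xbar i ^ 2 := by
    intro T hT
    refine Finset.sum_congr rfl fun i hi => ?_
    rw [hxb i (hT i hi)]; ring
  -- key: any set of card s' has xbar-square-sum ≤ that of S'
  have key : ∀ T : Finset (Fin n), T.card = s' →
      ∑ i ∈ T, xbar i ^ 2 ≤ ∑ i ∈ S', xbar i ^ 2 := by
    intro T hT
    have hcd : (T \ S').card = (S' \ T).card :=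
      Finset.card_sdiff_comm (hT.trans hcardS'.symm)
    have hdiff : ∑ i ∈ T \ S', xbar i ^ 2 ≤ ∑ i ∈ S' \ T, xbar i ^ 2 := by
      let e := Finset.equivOfCardEq hcd
      calc ∑ i ∈ T \ S', xbar i ^ 2
          = ∑ i ∈ (T \ S').attach, xbar i.1 ^ 2 := (Finset.sum_attach _ _).symm
        _ ≤ ∑ i ∈ (T \ S').attach, xbar (e i).1 ^ 2 := by
            refine Finset.sum_le_sum fun i _ => ?_
            have h1 : (i : Fin n) ∉ S' := (Finset.mem_sdiff.mp i.2).2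
            have h2 : ((e i : Fin n)) ∈ S' := (Finset.mem_sdiff.mp (e i).2).1
            have := htop _ h2 _ h1
            calc xbar i.1 ^ 2 = |xbar i.1| ^ 2 := (sq_abs _).symm
              _ ≤ |xbar (e i).1| ^ 2 := pow_le_pow_left₀ (abs_nonneg _) this 2
              _ = xbar (e i).1 ^ 2 := sq_abs _
        _ = ∑ j ∈ (S' \ T).attach, xbar j.1 ^ 2 := by
            rw [← Finset.univ_eq_attach, ← Finset.univ_eq_attach]
            exact Equiv.sum_comp e (fun j => xbar j.1 ^ 2)
        _ = ∑ i ∈ S' \ T, xbar i ^ 2 := Finset.sum_attach _ fun i => xbar i ^ 2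
    have h1 := Finset.sum_inter_add_sum_sdiff T S' (fun i => xbar i ^ 2)
    have h2 := Finset.sum_inter_add_sum_sdiff S' T (fun i => xbar i ^ 2)
    rw [Finset.inter_comm] at h1
    linarith
  -- apply with T = A' ∪ (S \ B')
  have hdisj : Disjoint A' (S \ B') := by
    refine Finset.disjoint_left.mpr fun i hi hiS => ?_
    exact (Finset.mem_compl.mp (hA' hi)) (Finset.mem_sdiff.mp hiS).1
  have hBcard : B'.card ≤ s' := hcardS ▸ Finset.card_le_card hB'
  have hTcard : (A' ∪ (S \ B')).card = s' := by
    rw [Finset.card_union_of_disjoint hdisj, Finset.card_sdiff_of_subset hB', hcardS, hcard]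
    omega
  have hmain := key _ hTcard
  rw [Finset.sum_union hdisj] at hmain
  have e1 : ∑ i ∈ S \ B', xbar i ^ 2 = ∑ i ∈ S, xbar i ^ 2 - ∑ i ∈ B', xbar i ^ 2 :=
    Finset.sum_sdiff_eq_sub hB'
  have e2 : ∑ i ∈ S', xbar i ^ 2 = ∑ i ∈ S' ∩ S, xbar i ^ 2 + ∑ i ∈ A, xbar i ^ 2 := by
    rw [hA]; exact (Finset.sum_inter_add_sum_sdiff S' S _).symm
  have e3 : ∑ i ∈ S, xbar i ^ 2 = ∑ i ∈ S' ∩ S, xbar i ^ 2 + ∑ i ∈ B, xbar i ^ 2 := by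
    rw [hB, Finset.inter_comm]; exact (Finset.sum_inter_add_sum_sdiff S S' _).symm
  have hAsub : ∀ i ∈ A, i ∉ S := by
    intro i hi; rw [hA] at hi; exact (Finset.mem_sdiff.mp hi).2
  have hA'sub : ∀ i ∈ A', i ∉ S := fun i hi => Finset.mem_compl.mp (hA' hi)
  rw [hsq A hAsub, hsq A' hA'sub]
  linarith
end

section
/- Let f: ℝⁿ → ℝ be α-strongly convex and let g(x) = f(x) + (β/2)‖x‖²_{w,2} where w ∈ [0,1]ⁿ and ‖x‖²_{w,2} = Σᵢ wᵢxᵢ². Then for any x, x* ∈ ℝⁿ: f(x*) - f(x) ≥ -α⁻¹‖∇_{S∪S*} g(x)‖₂² - β⟨wx, x* - x⟩ + (α/4)‖x* - x‖₂², where S = supp(x), S* = supp(x*), wx denotes the entrywise product, and ∇_T g(x) = (∇g(x))_T. -/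
private lemma key_ineq (α a b : ℝ) (hα : 0 < α) : a * b ≥ -α⁻¹ * a^2 - (α/4) * b^2 := by
  have h1 : α⁻¹ * (a + (α/2)*b)^2 ≥ 0 := mul_nonneg (inv_nonneg.mpr hα.le) (sq_nonneg _)
  have h2 : α * α⁻¹ = 1 := mul_inv_cancel₀ hα.ne'
  nlinarith [h1, h2, sq_nonneg b]

/-- Strong convexity step bound for the regularized function.  Let f be
    differentiable and α-strongly convex, w ∈ [0,1]ⁿ, and
    g(x) = f(x) + (β/2)·Σᵢ wᵢ xᵢ².  Then for any x, x* with supports S, S*: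
    f(x*) - f(x) ≥ -α⁻¹‖∇_{S∪S*} g(x)‖₂² - β⟨wx, x*-x⟩ + (α/4)‖x*-x‖₂². -/
theorem strong_convexity_regularized_bound (n : ℕ)
    (f : EuclideanSpace ℝ (Fin n) → ℝ) (hf : Differentiable ℝ f)
    (α β : ℝ) (hα : 0 < α) (hβ : 0 < β)
    (hstrong : ∀ x y : EuclideanSpace ℝ (Fin n),
      f y ≥ f x + (inner ℝ (gradient f x) (y - x) : ℝ) + (α / 2) * ‖y - x‖ ^ 2)
    (w : Fin n → ℝ) (hw : ∀ i, 0 ≤ w i ∧ w i ≤ 1)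
    (g : EuclideanSpace ℝ (Fin n) → ℝ)
    (hg : ∀ x : EuclideanSpace ℝ (Fin n), g x = f x + (β / 2) * ∑ i, w i * x i ^ 2)
    (x xstar : EuclideanSpace ℝ (Fin n))
    (S Sstar : Finset (Fin n))
    (hS : ∀ i, x i ≠ 0 ↔ i ∈ S) (hSstar : ∀ i, xstar i ≠ 0 ↔ i ∈ Sstar) :
    f xstar - f x ≥
      -α⁻¹ * (∑ i ∈ S ∪ Sstar, (gradient g x i) ^ 2)
        - β * (∑ i, w i * x i * (xstar i - x i))
        + (α / 4) * ‖xstar - x‖ ^ 2 := by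
  classical
  set v : EuclideanSpace ℝ (Fin n) := WithLp.toLp 2 (fun i => β * (w i * x i)) with hv
  have hproj : ∀ i : Fin n, HasFDerivAt (fun y : EuclideanSpace ℝ (Fin n) => y i)
      (EuclideanSpace.proj (𝕜 := ℝ) i) x := fun i => (EuclideanSpace.proj (𝕜 := ℝ) i).hasFDerivAt
  have hterm : ∀ i : Fin n, HasFDerivAt (fun y : EuclideanSpace ℝ (Fin n) => w i * y i ^ 2)
      (w i • (x i • EuclideanSpace.proj (𝕜 := ℝ) i + x i • EuclideanSpace.proj (𝕜 := ℝ) i)) x := by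
    intro i
    have h2 : HasFDerivAt (fun y : EuclideanSpace ℝ (Fin n) => y i * y i)
        (x i • EuclideanSpace.proj (𝕜 := ℝ) i + x i • EuclideanSpace.proj (𝕜 := ℝ) i) x :=
      (hproj i).mul (hproj i)
    simpa [pow_two] using h2.const_mul (w i)
  have hsum : HasFDerivAt (fun y : EuclideanSpace ℝ (Fin n) => ∑ i, w i * y i ^ 2)
      (∑ i, w i • (x i • EuclideanSpace.proj (𝕜 := ℝ) i + x i • EuclideanSpace.proj (𝕜 := ℝ) i)) x :=
    HasFDerivAt.fun_sum (fun i _ => hterm i)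
  have hh : HasGradientAt (fun y : EuclideanSpace ℝ (Fin n) => (β/2) * ∑ i, w i * y i ^ 2) v x := by
    rw [hasGradientAt_iff_hasFDerivAt]
    have hF := hsum.const_mul (β/2)
    have heq : ((β/2) • ∑ i, w i • (x i • EuclideanSpace.proj (𝕜 := ℝ) i + x i • EuclideanSpace.proj (𝕜 := ℝ) i)) =
        (InnerProductSpace.toDual ℝ (EuclideanSpace ℝ (Fin n)) v) := by
      ext y
      simp only [ContinuousLinearMap.smul_apply, ContinuousLinearMap.coe_sum',
        Finset.sum_apply, ContinuousLinearMap.coe_smul', Pi.smul_apply,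
        ContinuousLinearMap.add_apply, PiLp.proj_apply,
        smul_eq_mul, InnerProductSpace.toDual_apply_apply,
        PiLp.inner_apply, RCLike.inner_apply, conj_trivial, Finset.mul_sum]
      refine Finset.sum_congr rfl fun i _ => ?_
      show (β/2) * (w i * (x i * y i + x i * y i)) = y i * (β * (w i * x i))
      ring
    rw [← heq]
    exact hF
  have hgg : HasGradientAt g (gradient f x + v) x := by
    rw [hasGradientAt_iff_hasFDerivAt]
    have hF := ((hf x).hasGradientAt.hasFDerivAt).add hh.hasFDerivAt
    have hF2 : HasFDerivAt g (InnerProductSpace.toDual ℝ _ (gradient f x)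
        + InnerProductSpace.toDual ℝ _ v) x := by
      refine hF.congr_of_eventuallyEq ?_
      filter_upwards with y using (hg y)
    simpa [map_add] using hF2
  have hgradg : gradient g x = gradient f x + v := hgg.gradient
  set T := S ∪ Sstar with hT
  -- inner products as sums
  have hinner_f : (inner ℝ (gradient f x) (xstar - x) : ℝ) =
      (∑ i ∈ T, gradient g x i * (xstar i - x i))
        - β * ∑ i, w i * x i * (xstar i - x i) := by
    have hvd : (inner ℝ v (xstar - x) : ℝ) = β * ∑ i, w i * x i * (xstar i - x i) := by
      simp only [PiLp.inner_apply, RCLike.inner_apply, conj_trivial, Finset.mul_sum]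
      refine Finset.sum_congr rfl fun i _ => ?_
      show ((xstar - x) i) * (β * (w i * x i)) = β * (w i * x i * (xstar i - x i))
      simp [PiLp.sub_apply]; ring
    have hgd : (inner ℝ (gradient g x) (xstar - x) : ℝ) =
        ∑ i ∈ T, gradient g x i * (xstar i - x i) := by
      rw [PiLp.inner_apply]
      simp only [RCLike.inner_apply, conj_trivial]
      rw [← Finset.sum_subset (Finset.subset_univ T)]
      · exact Finset.sum_congr rfl fun i _ => by rw [PiLp.sub_apply, mul_comm]
      · intro i _ hi
        have hx0 : x i = 0 := by
          by_contra h; exact hi (Finset.mem_union_left _ ((hS i).mp h))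
        have hxs0 : xstar i = 0 := by
          by_contra h; exact hi (Finset.mem_union_right _ ((hSstar i).mp h))
        simp [PiLp.sub_apply, hx0, hxs0]
    have : (inner ℝ (gradient g x) (xstar - x) : ℝ) =
        (inner ℝ (gradient f x) (xstar - x) : ℝ) + (inner ℝ v (xstar - x) : ℝ) := by
      rw [hgradg, inner_add_left]
    linarith [this, hvd, hgd]
  -- norm as sum
  have hnorm : ‖xstar - x‖ ^ 2 = ∑ i, (xstar i - x i) ^ 2 := by
    rw [EuclideanSpace.norm_eq, Real.sq_sqrt (Finset.sum_nonneg fun i _ => sq_nonneg _)]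
    refine Finset.sum_congr rfl fun i _ => ?_
    simp [PiLp.sub_apply, sq_abs]
  -- key bound on T-sum
  have hkey : (∑ i ∈ T, gradient g x i * (xstar i - x i)) ≥
      -α⁻¹ * (∑ i ∈ T, (gradient g x i) ^ 2) - (α/4) * ∑ i ∈ T, (xstar i - x i) ^ 2 := by
    have hrw : -α⁻¹ * (∑ i ∈ T, (gradient g x i) ^ 2) - (α/4) * ∑ i ∈ T, (xstar i - x i) ^ 2
        = ∑ i ∈ T, (-α⁻¹ * (gradient g x i)^2 - (α/4) * (xstar i - x i)^2) := by
      rw [Finset.sum_sub_distrib, ← Finset.mul_sum, ← Finset.mul_sum, neg_mul]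
    rw [hrw]
    exact Finset.sum_le_sum fun i _ => key_ineq α (gradient g x i) (xstar i - x i) hα
  have hTle : (∑ i ∈ T, (xstar i - x i) ^ 2) ≤ ‖xstar - x‖ ^ 2 := by
    rw [hnorm]
    exact Finset.sum_le_sum_of_subset_of_nonneg (Finset.subset_univ T)
      (fun i _ _ => sq_nonneg _)
  have hsc := hstrong x xstar
  have hα4 : (0:ℝ) ≤ α/4 := by linarith
  nlinarith [mul_le_mul_of_nonneg_left hTle hα4]
end

section
/- Let κ ≥ 1 and s ≥ 1 be integers, let n = s(κ² + κ + 1), and fix δ ∈ (0, 1/4). Define the diagonal matrix A ∈ ℝ^{n×n} with A_{ii} = 1 for i ∈ I₁ = [1,s], A_{ii} = √κ for i ∈ I₂ = [s+1, s(κ+1)], A_{ii} = 1 for i ∈ I₃ = [s(κ+1)+1, n], and b ∈ ℝⁿ with bᵢ = κ√(1-4δ) on I₁, bᵢ = √κ·√(1-2δ) on I₂, bᵢ = 1 on I₃. Let f(x) = (1/2)‖Ax - b‖₂². Let S ⊆ I₃ with |S| = s' ≤ 0.6sκ², and define x by xᵢ = 1 for i ∈ S and 0 otherwise. Then x = H_{s'}(x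 - (1/κ)∇f(x)), i.e. x is a fixpoint of IHT with step size 1/β where β = κ is the smoothness constant of f. -/
/-- The IHT lower-bound instance.  With n = s(κ²+κ+1), diagonal matrix A and
    vector b as in the construction, f(x) = ½‖Ax-b‖₂², S ⊆ I₃ with
    |S| = s' ≤ 0.6sκ², and x the indicator of S, the vector
    y = x - (1/κ)∇f(x) agrees with x on S and every coordinate outside S has
    magnitude at most that of every coordinate in S; hence x = H_{s'}(y),
    i.e. x is a fixpoint of IHT with step size 1/β = 1/κ. -/
theorem iht_fixpoint_lower_bound (s κ : ℕ) (hκ : 1 ≤ κ) (hs : 1 ≤ s)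
    (δ : ℝ) (hδ0 : 0 < δ) (hδ : δ < 1 / 4)
    (d b : Fin (s * (κ ^ 2 + κ + 1)) → ℝ)
    (hd : ∀ i, d i = if (i : ℕ) < s then 1
      else if (i : ℕ) < s * (κ + 1) then Real.sqrt κ else 1)
    (hb : ∀ i, b i = if (i : ℕ) < s then (κ : ℝ) * Real.sqrt (1 - 4 * δ)
      else if (i : ℕ) < s * (κ + 1) then Real.sqrt κ * Real.sqrt (1 - 2 * δ) else 1)
    (f : EuclideanSpace ℝ (Fin (s * (κ ^ 2 + κ + 1))) → ℝ)
    (hf : ∀ z, f z = (1 / 2) * ∑ i, (d i * z i - b i) ^ 2)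
    (S : Finset (Fin (s * (κ ^ 2 + κ + 1))))
    (hS3 : ∀ i ∈ S, s * (κ + 1) ≤ (i : ℕ))
    (hScard : (S.card : ℝ) ≤ 0.6 * s * κ ^ 2)
    (x : EuclideanSpace ℝ (Fin (s * (κ ^ 2 + κ + 1))))
    (hx : ∀ i, x i = if i ∈ S then (1 : ℝ) else 0)
    (y : EuclideanSpace ℝ (Fin (s * (κ ^ 2 + κ + 1))))
    (hy : y = x - (1 / (κ : ℝ)) • gradient f x) :
    (∀ i ∈ S, y i = x i) ∧ (∀ j ∉ S, ∀ i ∈ S, |y j| ≤ |y i|) := by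
  have hκR : (1:ℝ) ≤ κ := by exact_mod_cast hκ
  have hκ0 : (0:ℝ) < κ := lt_of_lt_of_le one_pos hκR
  set g : EuclideanSpace ℝ (Fin (s * (κ ^ 2 + κ + 1))) :=
    WithLp.toLp 2 (fun i => d i * (d i * x i - b i)) with hg
  have hF : f = fun z => ∑ i, (1/2) * (d i * z i - b i) ^ 2 := by
    funext z; rw [hf, Finset.mul_sum]
  have hderiv : HasFDerivAt f
      (∑ i, (d i * (d i * x i - b i)) • (EuclideanSpace.proj i :
        EuclideanSpace ℝ (Fin (s * (κ ^ 2 + κ + 1))) →L[ℝ] ℝ)) x := by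
    rw [hF]
    apply HasFDerivAt.fun_sum (A := fun i (z : EuclideanSpace ℝ (Fin (s * (κ ^ 2 + κ + 1)))) => (1/2) * (d i * z i - b i) ^ 2)
    intro i _
    have h2 : HasDerivAt (fun t : ℝ => d i * t - b i) (d i) (x i) := by
      simpa using ((hasDerivAt_id (x i)).const_mul (d i)).sub_const (b i)
    have h1 : HasDerivAt (fun t : ℝ => (1/2) * (d i * t - b i) ^ 2)
        (d i * (d i * x i - b i)) (x i) := by
      have h3 := (h2.fun_pow 2).const_mul (1/2 : ℝ)
      refine h3.congr_deriv ?_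
      ring
    exact (h1.comp_hasFDerivAt x
      (EuclideanSpace.proj i :
        EuclideanSpace ℝ (Fin (s * (κ ^ 2 + κ + 1))) →L[ℝ] ℝ).hasFDerivAt :)
  have hgrad : gradient f x = g := by
    apply HasGradientAt.gradient
    rw [hasGradientAt_iff_hasFDerivAt]
    refine hderiv.congr_fderiv ?_
    ext v
    simp [InnerProductSpace.toDual_apply_apply, PiLp.inner_apply, hg, RCLike.inner_apply,
      mul_comm]
  have hyi : ∀ i, y i = x i - (1 / (κ:ℝ)) * g i := by
    intro i
    rw [hy, hgrad]
    rfl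
  -- coordinates of y
  have hyS : ∀ i ∈ S, y i = 1 := by
    intro i hi
    have h3 := hS3 i hi
    have hns : ¬ ((i:ℕ) < s * (κ + 1)) := not_lt.2 h3
    have hns' : ¬ ((i:ℕ) < s) := by
      have : s ≤ s * (κ + 1) := Nat.le_mul_of_pos_right s (by omega)
      omega
    have hdi : d i = 1 := by rw [hd i, if_neg hns', if_neg hns]
    have hbi : b i = 1 := by rw [hb i, if_neg hns', if_neg hns]
    have hxi : x i = 1 := by rw [hx i, if_pos hi]
    rw [hyi i, hg]
    simp [hdi, hbi, hxi]
  refine ⟨fun i hi => by rw [hyS i hi, hx i, if_pos hi], fun j hj i hi => ?_⟩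
  rw [hyS i hi]
  have hxj : x j = 0 := by rw [hx j, if_neg hj]
  have hyj : y j = (1/(κ:ℝ)) * (d j * b j) := by
    rw [hyi j, hg]; simp [hxj]
  rw [abs_one]
  rcases lt_or_ge (j:ℕ) s with h1 | h1
  · have hdj : d j = 1 := by rw [hd j, if_pos h1]
    have hbj : b j = (κ:ℝ) * Real.sqrt (1 - 4*δ) := by rw [hb j, if_pos h1]
    rw [hyj, hdj, hbj]
    rw [abs_of_nonneg (by positivity)]
    calc 1/(κ:ℝ) * (1 * ((κ:ℝ) * Real.sqrt (1 - 4*δ)))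
        = Real.sqrt (1 - 4*δ) := by field_simp
      _ ≤ 1 := Real.sqrt_le_one.2 (by linarith)
  · rcases lt_or_ge (j:ℕ) (s * (κ+1)) with h2 | h2
    · have hdj : d j = Real.sqrt κ := by rw [hd j, if_neg (not_lt.2 h1), if_pos h2]
      have hbj : b j = Real.sqrt κ * Real.sqrt (1 - 2*δ) := by
        rw [hb j, if_neg (not_lt.2 h1), if_pos h2]
      rw [hyj, hdj, hbj]
      rw [abs_of_nonneg (by positivity)]
      have hsq : Real.sqrt κ * Real.sqrt κ = (κ:ℝ) :=
        Real.mul_self_sqrt (le_of_lt hκ0)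
      calc 1/(κ:ℝ) * (Real.sqrt κ * (Real.sqrt κ * Real.sqrt (1 - 2*δ)))
          = Real.sqrt (1 - 2*δ) := by rw [← mul_assoc (Real.sqrt κ), hsq]; field_simp
        _ ≤ 1 := Real.sqrt_le_one.2 (by linarith)
    · have hdj : d j = 1 := by rw [hd j, if_neg (not_lt.2 h1), if_neg (not_lt.2 h2)]
      have hbj : b j = 1 := by rw [hb j, if_neg (not_lt.2 h1), if_neg (not_lt.2 h2)]
      rw [hyj, hdj, hbj]
      rw [abs_of_nonneg (by positivity)]
      rw [one_mul, mul_one, div_le_one hκ0]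
      exact hκR
end

section
/- Let w, w' ∈ ℝⁿ with w' = (w - c·(wx)²/‖x‖²_{w,2})_{≥1/2}, where x ∈ ℝⁿ with ‖x‖²_{w,2} = Σᵢ wᵢxᵢ² > 0, c > 0, (wx)² is the entrywise square of the entrywise product, and (·)_{≥1/2} zeroes entries below 1/2. Define w̄ᵢ = wᵢ if wᵢ ≥ 1/2 and w̄ᵢ = 1/2 if wᵢ = 0 (assuming w ∈ ({0} ∪ [1/2,1])ⁿ), and similarly w̄'. Then ‖w̄‖₁ - ‖w̄'‖₁ ≤ c. -/
/-- Weight-decrease bound.  Let w ∈ ({0} ∪ [1/2,1])ⁿ, x with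
    R = Σᵢ wᵢxᵢ² > 0, c > 0, and let
    w'ᵢ = (wᵢ - c(wᵢxᵢ)²/R)_{≥1/2} (entries below 1/2 are zeroed out).
    With w̄ᵢ = wᵢ if wᵢ ≥ 1/2 and w̄ᵢ = 1/2 if wᵢ = 0 (similarly w̄'),
    we have ‖w̄‖₁ - ‖w̄'‖₁ ≤ c. -/
theorem weight_decrease_le (n : ℕ) (w x : Fin n → ℝ) (c : ℝ) (hc : 0 < c)
    (hw : ∀ i, w i = 0 ∨ (1 / 2 ≤ w i ∧ w i ≤ 1))
    (R : ℝ) (hR : R = ∑ i, w i * x i ^ 2) (hRpos : 0 < R)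
    (w' : Fin n → ℝ)
    (hw' : ∀ i, w' i =
      if w i - c * (w i * x i) ^ 2 / R < 1 / 2 then 0
      else w i - c * (w i * x i) ^ 2 / R)
    (wbar wbar' : Fin n → ℝ)
    (hwbar : ∀ i, wbar i = if w i = 0 then 1 / 2 else w i)
    (hwbar' : ∀ i, wbar' i = if w' i = 0 then 1 / 2 else w' i) :
    (∑ i, wbar i) - (∑ i, wbar' i) ≤ c := by
  have key : ∀ i, wbar i - wbar' i ≤ c * (w i * x i) ^ 2 / R := by
    intro i
    have hd : 0 ≤ c * (w i * x i) ^ 2 / R :=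
      div_nonneg (mul_nonneg hc.le (sq_nonneg _)) hRpos.le
    rw [hwbar i, hwbar' i, hw' i]
    rcases hw i with h0 | ⟨h1, h2⟩
    · simp [h0]
    · have hne : w i ≠ 0 := by linarith
      by_cases hlt : w i - c * (w i * x i) ^ 2 / R < 1 / 2
      · rw [if_pos hlt, if_neg hne, if_pos rfl]
        linarith
      · have : w i - c * (w i * x i) ^ 2 / R ≠ 0 := by
          push_neg at hlt; intro h; rw [h] at hlt; linarith
        rw [if_neg hlt, if_neg hne, if_neg this]
        linarith
  calc (∑ i, wbar i) - (∑ i, wbar' i)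
      = ∑ i, (wbar i - wbar' i) := by rw [Finset.sum_sub_distrib]
    _ ≤ ∑ i, c * (w i * x i) ^ 2 / R := Finset.sum_le_sum fun i _ => key i
    _ = c * (∑ i, (w i * x i) ^ 2) / R := by
        rw [Finset.mul_sum, Finset.sum_div]
    _ ≤ c * R / R := by
        gcongr
        rw [hR]
        apply Finset.sum_le_sum
        intro i _
        rcases hw i with h0 | ⟨h1, h2⟩
        · simp [h0]
        · have : (w i * x i) ^ 2 = w i ^ 2 * x i ^ 2 := by ring
          rw [this]
          have hwnn : 0 ≤ w i := by linarith
          nlinarith [sq_nonneg (x i)]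
    _ = c := by field_simp
end

section
/- Let f: ℝⁿ → ℝ be β-smooth, let g(x) = f(x) + (β/2)‖x‖²_{w,2} with w ∈ [0,1]ⁿ, let x have support S with |S| = s', and let x̄ = x - (2β)⁻¹∇g(x), x' = H_{s'}(x̄) with support S', A = S'\S, B = S\S'. Then g(x') - g(x) ≤ -(4β)⁻¹‖∇_{S'∪B} g(x)‖₂² + β‖x̄_B‖₂². -/
set_option maxHeartbeats 1000000


/-- Regularized IHT descent inequality.  Let f be β-smooth and differentiable,
    w ∈ [0,1]ⁿ, g(x) = f(x) + (β/2)Σᵢ wᵢxᵢ², let x have support S with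
    |S| = s', x̄ = x - (2β)⁻¹∇g(x), and x' = H_{s'}(x̄) with support S'
    (a set of s' indices of largest magnitude of x̄), A = S'\S, B = S\S'.
    Then g(x') - g(x) ≤ -(4β)⁻¹‖∇_{S'∪B} g(x)‖₂² + β‖x̄_B‖₂². -/
theorem regularized_iht_descent (n : ℕ)
    (f : EuclideanSpace ℝ (Fin n) → ℝ) (hf : Differentiable ℝ f)
    (β : ℝ) (hβ : 0 < β)
    (hsmooth : ∀ x y : EuclideanSpace ℝ (Fin n),
      f y ≤ f x + (inner ℝ (gradient f x) (y - x) : ℝ) + (β / 2) * ‖y - x‖ ^ 2)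
    (w : Fin n → ℝ) (hw : ∀ i, 0 ≤ w i ∧ w i ≤ 1)
    (g : EuclideanSpace ℝ (Fin n) → ℝ)
    (hg : ∀ x : EuclideanSpace ℝ (Fin n), g x = f x + (β / 2) * ∑ i, w i * x i ^ 2)
    (x : EuclideanSpace ℝ (Fin n)) (s' : ℕ) (S S' : Finset (Fin n))
    (hS : ∀ i, x i ≠ 0 ↔ i ∈ S) (hcS : S.card = s') (hcS' : S'.card = s')
    (xbar : EuclideanSpace ℝ (Fin n))
    (hxbar : xbar = x - (2 * β)⁻¹ • gradient g x)
    (htop : ∀ i ∈ S', ∀ j ∉ S', |xbar j| ≤ |xbar i|)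
    (x' : EuclideanSpace ℝ (Fin n))
    (hx' : ∀ i, x' i = if i ∈ S' then xbar i else 0)
    (B : Finset (Fin n)) (hB : B = S \ S') :
    g x' - g x ≤
      -(4 * β)⁻¹ * (∑ i ∈ S' ∪ B, (gradient g x i) ^ 2) + β * ∑ i ∈ B, xbar i ^ 2 := by
  classical
  have hβ' : β ≠ 0 := ne_of_gt hβ
  set G : EuclideanSpace ℝ (Fin n) := gradient g x with hGdef
  set v0 : EuclideanSpace ℝ (Fin n) :=
    (WithLp.equiv 2 (Fin n → ℝ)).symm (fun i => β * w i * x i) with hv0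
  -- derivative of the quadratic part
  have hq : HasFDerivAt (fun y : EuclideanSpace ℝ (Fin n) => (β / 2) * ∑ i, w i * y i ^ 2)
      (∑ i : Fin n, (β * w i * x i) •
        (EuclideanSpace.proj i : EuclideanSpace ℝ (Fin n) →L[ℝ] ℝ)) x := by
    have hrw : (fun y : EuclideanSpace ℝ (Fin n) => (β / 2) * ∑ i, w i * y i ^ 2)
        = fun y => ∑ i : Fin n, (β / 2 * w i) * (y i * y i) := by
      funext y; rw [Finset.mul_sum]; congr 1; funext i; ring
    rw [hrw]
    apply HasFDerivAt.fun_sum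
    intro i _
    have h1 : HasFDerivAt (fun y : EuclideanSpace ℝ (Fin n) => y i)
        (EuclideanSpace.proj i : EuclideanSpace ℝ (Fin n) →L[ℝ] ℝ) x := by
      exact (PiLp.proj (𝕜 := ℝ) 2 (fun _ : Fin n => ℝ) i).hasFDerivAt
    have h2 := (h1.fun_mul h1).const_mul (β / 2 * w i)
    convert h2 using 1
    case e'_8 => rfl
    ext y
    simp only [ContinuousLinearMap.coe_smul', Pi.smul_apply, ContinuousLinearMap.add_apply,
      PiLp.proj_apply, smul_eq_mul]
    ring
  have hfd : HasFDerivAt f (InnerProductSpace.toDual ℝ _ (gradient f x)) x :=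
    (hf x).hasGradientAt.hasFDerivAt
  have hgd : HasFDerivAt g (InnerProductSpace.toDual ℝ _ (gradient f x) +
      ∑ i : Fin n, (β * w i * x i) •
        (EuclideanSpace.proj i : EuclideanSpace ℝ (Fin n) →L[ℝ] ℝ)) x := by
    have : g = fun y => f y + (β / 2) * ∑ i, w i * y i ^ 2 := funext hg
    rw [this]; exact hfd.add hq
  have hGA : HasGradientAt g (gradient f x + v0) x := by
    rw [hasGradientAt_iff_hasFDerivAt, map_add]
    convert hgd using 2
    case e'_4 => rfl
    case e'_8 => rfl
    ext y
    simp only [InnerProductSpace.toDual_apply_apply, PiLp.inner_apply, RCLike.inner_apply,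
      conj_trivial, ContinuousLinearMap.coe_sum', Finset.sum_apply,
      ContinuousLinearMap.coe_smul', Pi.smul_apply, PiLp.proj_apply, smul_eq_mul, hv0,
      WithLp.equiv_symm_apply, PiLp.toLp_apply]
    exact Finset.sum_congr rfl fun i _ => mul_comm _ _
  have hGeq : G = gradient f x + v0 := hGA.gradient
  have hgrad : ∀ i, G i = gradient f x i + β * w i * x i := by
    intro i
    rw [hGeq]
    simp [hv0, WithLp.equiv_symm_apply, PiLp.toLp_apply]
  have hxb : ∀ i, xbar i = x i - (2 * β)⁻¹ * G i := by
    intro i; rw [hxbar]; simp [hGdef]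
  -- smoothness of g
  have key : g x' - g x ≤ ∑ i, (G i * (x' i - x i) + β * (x' i - x i) ^ 2) := by
    have h1 := hsmooth x x'
    have hinner : (inner ℝ (gradient f x) (x' - x) : ℝ)
        = ∑ i, gradient f x i * (x' i - x i) := by
      rw [PiLp.inner_apply]
      simp [RCLike.inner_apply, mul_comm]
    have hnorm : ‖x' - x‖ ^ 2 = ∑ i, (x' i - x i) ^ 2 := by
      rw [← real_inner_self_eq_norm_sq, PiLp.inner_apply]
      simp [RCLike.inner_apply, sq]
    rw [hg x', hg x]
    have h2 : (β / 2) * ∑ i, w i * x' i ^ 2 - (β / 2) * ∑ i, w i * x i ^ 2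
        = ∑ i, (β / 2) * (w i * (x' i ^ 2 - x i ^ 2)) := by
      rw [Finset.mul_sum, Finset.mul_sum, ← Finset.sum_sub_distrib]
      exact Finset.sum_congr rfl fun i _ => by ring
    have h3 : ∑ i, (gradient f x i * (x' i - x i) + (β / 2) * (x' i - x i) ^ 2
          + (β / 2) * (w i * (x' i ^ 2 - x i ^ 2)))
        ≤ ∑ i, (G i * (x' i - x i) + β * (x' i - x i) ^ 2) := by
      apply Finset.sum_le_sum
      intro i _
      rw [hgrad i]
      nlinarith [sq_nonneg (x' i - x i), (hw i).1, (hw i).2, hβ.le,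
        mul_nonneg (mul_nonneg hβ.le (sub_nonneg.2 (hw i).2)) (sq_nonneg (x' i - x i))]
    calc f x' + (β / 2) * ∑ i, w i * x' i ^ 2 - (f x + (β / 2) * ∑ i, w i * x i ^ 2)
        ≤ (∑ i, gradient f x i * (x' i - x i) + (β / 2) * ∑ i, (x' i - x i) ^ 2)
          + ∑ i, (β / 2) * (w i * (x' i ^ 2 - x i ^ 2)) := by
          have := h1
          rw [hinner, hnorm] at this
          linarith [h2.symm.le, h2.le, this]
      _ = ∑ i, (gradient f x i * (x' i - x i) + (β / 2) * (x' i - x i) ^ 2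
          + (β / 2) * (w i * (x' i ^ 2 - x i ^ 2))) := by
          rw [Finset.sum_add_distrib, Finset.sum_add_distrib, Finset.mul_sum]
      _ ≤ _ := h3
  -- now compute the sum exactly
  have hdisj : Disjoint S' B := by
    rw [hB]; exact Finset.disjoint_sdiff
  have hrestrict : ∑ i, (G i * (x' i - x i) + β * (x' i - x i) ^ 2)
      = ∑ i ∈ S' ∪ B, (G i * (x' i - x i) + β * (x' i - x i) ^ 2) := by
    refine (Finset.sum_subset (Finset.subset_univ _) ?_).symm
    intro i _ hi
    simp only [Finset.mem_union, hB, Finset.mem_sdiff, not_or, not_and, not_not] at hi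
    have hiS' : i ∉ S' := hi.1
    have hxi : x i = 0 := by
      by_contra h
      exact hiS' (hi.2 ((hS i).1 h))
    rw [hx' i, if_neg hiS', hxi]; ring
  have hS'sum : ∑ i ∈ S', (G i * (x' i - x i) + β * (x' i - x i) ^ 2)
      = ∑ i ∈ S', (-(4 * β)⁻¹ * G i ^ 2) := by
    apply Finset.sum_congr rfl
    intro i hi
    rw [hx' i, if_pos hi, hxb i]
    field_simp
    ring
  have hBsum : ∑ i ∈ B, (G i * (x' i - x i) + β * (x' i - x i) ^ 2)
      = ∑ i ∈ B, (-(4 * β)⁻¹ * G i ^ 2 + β * xbar i ^ 2) := by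
    apply Finset.sum_congr rfl
    intro i hi
    have hiS' : i ∉ S' := by
      rw [hB] at hi; exact (Finset.mem_sdiff.1 hi).2
    have hxi : x i = xbar i + (2 * β)⁻¹ * G i := by rw [hxb i]; ring
    rw [hx' i, if_neg hiS', hxi]
    field_simp
    ring
  have hfinal : ∑ i ∈ S' ∪ B, (G i * (x' i - x i) + β * (x' i - x i) ^ 2)
      = -(4 * β)⁻¹ * (∑ i ∈ S' ∪ B, G i ^ 2) + β * ∑ i ∈ B, xbar i ^ 2 := by
    rw [Finset.sum_union hdisj, Finset.sum_union hdisj, hS'sum, hBsum,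
      Finset.sum_add_distrib, ← Finset.mul_sum, ← Finset.mul_sum, ← Finset.mul_sum]
    ring
  calc g x' - g x ≤ ∑ i, (G i * (x' i - x i) + β * (x' i - x i) ^ 2) := key
    _ = -(4 * β)⁻¹ * (∑ i ∈ S' ∪ B, G i ^ 2) + β * ∑ i ∈ B, xbar i ^ 2 := by
        rw [hrestrict, hfinal]
end

section
/- Let g: ℝ^{m×n} → ℝ be differentiable with ‖∇g(A') - ∇g(A)‖_F ≤ 2β‖A'-A‖_F for all A, A'. Let A = UΛVᵀ (SVD, rank r'), suppose Π_{im(U)} ∇g(A) Π_{im(V)} = O, let η = (2β)⁻¹, let j minimize the singular value λⱼ, and set A' = A - η·H₁(∇g(A)) - λⱼ uⱼ vⱼᵀ. Then g(A') - g(A) ≤ -(8β)⁻¹‖∇g(A)‖₂² + 2βλⱼ², where ‖·‖₂ denotes the spectral norm and H₁ returns the top singular component. -/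
open Matrix

/-- Frobenius inner product of two real matrices. -/
noncomputable def frobInner {m n : ℕ} (A B : Matrix (Fin m) (Fin n) ℝ) : ℝ :=
  ∑ i, ∑ j, A i j * B i j

/-- Frobenius norm of a real matrix. -/
noncomputable def frobNorm {m n : ℕ} (M : Matrix (Fin m) (Fin n) ℝ) : ℝ :=
  Real.sqrt (frobInner M M)

namespace frobAux
variable {m n : ℕ}

lemma comm (A B : Matrix (Fin m) (Fin n) ℝ) : frobInner A B = frobInner B A := by
  unfold frobInner
  exact Finset.sum_congr rfl fun i _ => Finset.sum_congr rfl fun k _ => mul_comm _ _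

lemma add_right (X Y Z : Matrix (Fin m) (Fin n) ℝ) :
    frobInner X (Y + Z) = frobInner X Y + frobInner X Z := by
  unfold frobInner
  rw [← Finset.sum_add_distrib]
  refine Finset.sum_congr rfl fun i _ => ?_
  rw [← Finset.sum_add_distrib]
  exact Finset.sum_congr rfl fun k _ => by simp [Matrix.add_apply, mul_add]

lemma smul_right (c : ℝ) (X Y : Matrix (Fin m) (Fin n) ℝ) :
    frobInner X (c • Y) = c * frobInner X Y := by
  unfold frobInner
  rw [Finset.mul_sum]
  refine Finset.sum_congr rfl fun i _ => ?_
  rw [Finset.mul_sum]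
  exact Finset.sum_congr rfl fun k _ => by simp [Matrix.smul_apply]; ring

lemma sub_right (X Y Z : Matrix (Fin m) (Fin n) ℝ) :
    frobInner X (Y - Z) = frobInner X Y - frobInner X Z := by
  have : Y - Z = Y + (-1 : ℝ) • Z := by module
  rw [this, add_right, smul_right]; ring

lemma self_nonneg (X : Matrix (Fin m) (Fin n) ℝ) : 0 ≤ frobInner X X := by
  unfold frobInner
  exact Finset.sum_nonneg fun i _ => Finset.sum_nonneg fun k _ => mul_self_nonneg _

lemma norm_mul_self (X : Matrix (Fin m) (Fin n) ℝ) :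
    frobNorm X * frobNorm X = frobInner X X := Real.mul_self_sqrt (self_nonneg X)

lemma norm_nonneg (X : Matrix (Fin m) (Fin n) ℝ) : 0 ≤ frobNorm X := Real.sqrt_nonneg _

lemma cauchy (X Y : Matrix (Fin m) (Fin n) ℝ) :
    frobInner X Y ≤ frobNorm X * frobNorm Y := by
  have hX : frobInner X X = ∑ x : Fin m × Fin n, (X x.1 x.2) ^ 2 := by
    unfold frobInner; rw [Fintype.sum_prod_type]
    exact Finset.sum_congr rfl fun i _ => Finset.sum_congr rfl fun k _ => (sq _).symm
  have hY : frobInner Y Y = ∑ x : Fin m × Fin n, (Y x.1 x.2) ^ 2 := by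
    unfold frobInner; rw [Fintype.sum_prod_type]
    exact Finset.sum_congr rfl fun i _ => Finset.sum_congr rfl fun k _ => (sq _).symm
  have hXY : frobInner X Y = ∑ x : Fin m × Fin n, X x.1 x.2 * Y x.1 x.2 := by
    unfold frobInner; rw [Fintype.sum_prod_type]
  have h2 : (frobInner X Y) ^ 2 ≤ frobInner X X * frobInner Y Y := by
    rw [hX, hY, hXY]
    exact Finset.sum_mul_sq_le_sq_mul_sq _ _ _
  rcases le_or_gt (frobInner X Y) 0 with h | h
  · exact h.trans (mul_nonneg (norm_nonneg X) (norm_nonneg Y))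
  · have : frobInner X Y = Real.sqrt ((frobInner X Y) ^ 2) := (Real.sqrt_sq h.le).symm
    rw [this, frobNorm, frobNorm, ← Real.sqrt_mul (self_nonneg X)]
    exact Real.sqrt_le_sqrt h2

lemma vecMulVec_right (X : Matrix (Fin m) (Fin n) ℝ) (a : Fin m → ℝ) (b : Fin n → ℝ) :
    frobInner X (Matrix.vecMulVec a b) = a ⬝ᵥ (X *ᵥ b) := by
  unfold frobInner
  rw [dotProduct]
  refine Finset.sum_congr rfl fun i _ => ?_
  rw [Matrix.mulVec, dotProduct, Finset.mul_sum]
  exact Finset.sum_congr rfl fun k _ => by rw [Matrix.vecMulVec_apply]; ring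

lemma vecMulVec_pair (a c : Fin m → ℝ) (b d : Fin n → ℝ) :
    frobInner (Matrix.vecMulVec a b) (Matrix.vecMulVec c d) = (a ⬝ᵥ c) * (b ⬝ᵥ d) := by
  unfold frobInner
  rw [dotProduct, dotProduct, Finset.sum_mul]
  refine Finset.sum_congr rfl fun i _ => ?_
  rw [Finset.mul_sum]
  exact Finset.sum_congr rfl fun k _ => by
    rw [Matrix.vecMulVec_apply, Matrix.vecMulVec_apply]; ring

lemma norm_smul (c : ℝ) (X : Matrix (Fin m) (Fin n) ℝ) :
    frobNorm (c • X) = |c| * frobNorm X := by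
  have : frobInner (c • X) (c • X) = c ^ 2 * frobInner X X := by
    rw [smul_right, comm, smul_right]; ring
  rw [frobNorm, this, Real.sqrt_mul (sq_nonneg c), Real.sqrt_sq_eq_abs, frobNorm]

lemma inner_expand (a b : ℝ) (P Q : Matrix (Fin m) (Fin n) ℝ) :
    frobInner (a • P + b • Q) (a • P + b • Q)
      = a ^ 2 * frobInner P P + b ^ 2 * frobInner Q Q + 2 * (a * b) * frobInner P Q := by
  rw [add_right, smul_right, smul_right, comm (a • P + b • Q) P, comm (a • P + b • Q) Q,
    add_right, add_right, smul_right, smul_right, smul_right, smul_right, comm Q P]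
  ring

/-- The descent lemma. -/
lemma descent {β : ℝ} (hβ : 0 < β)
    (g : Matrix (Fin m) (Fin n) ℝ → ℝ)
    (G : Matrix (Fin m) (Fin n) ℝ → Matrix (Fin m) (Fin n) ℝ)
    (hgrad : ∀ (A B : Matrix (Fin m) (Fin n) ℝ) (t : ℝ),
      HasDerivAt (fun s : ℝ => g (A + s • B)) (frobInner (G (A + t • B)) B) t)
    (hLip : ∀ A A' : Matrix (Fin m) (Fin n) ℝ,
      frobNorm (G A' - G A) ≤ 2 * β * frobNorm (A' - A))
    (A D : Matrix (Fin m) (Fin n) ℝ) :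
    g (A + D) ≤ g A + frobInner (G A) D + β * frobInner D D := by
  set c : ℝ := frobInner (G A) D with hc
  set N : ℝ := frobInner D D with hNdef
  have hN0 : 0 ≤ N := self_nonneg D
  set F : ℝ → ℝ := fun t => g (A + t • D) - t * c - β * t ^ 2 * N with hF
  have hder : ∀ t : ℝ, HasDerivAt F (frobInner (G (A + t • D)) D - c - β * (2 * t) * N) t := by
    intro t
    have h1 := hgrad A D t
    have h2 : HasDerivAt (fun s : ℝ => s * c) c t := by
      simpa using (hasDerivAt_id t).mul_const c
    have h3 : HasDerivAt (fun s : ℝ => β * s ^ 2 * N) (β * (2 * t) * N) t := by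
      have := ((hasDerivAt_pow 2 t).const_mul β).mul_const N
      simpa [mul_comm, mul_assoc, mul_left_comm] using this
    exact (h1.sub h2).sub h3
  have hcont : ContinuousOn F (Set.Icc 0 1) :=
    (continuous_iff_continuousAt.mpr fun t => (hder t).continuousAt).continuousOn
  have hdiff : DifferentiableOn ℝ F (interior (Set.Icc (0:ℝ) 1)) :=
    fun t _ => ((hder t).differentiableAt).differentiableWithinAt
  have hderiv_nonpos : ∀ t ∈ interior (Set.Icc (0:ℝ) 1), deriv F t ≤ 0 := by
    intro t ht
    rw [interior_Icc] at ht
    rw [(hder t).deriv]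
    have hlip1 : frobInner (G (A + t • D)) D - c ≤ 2 * β * t * N := by
      have h1 : frobInner (G (A + t • D)) D - c = frobInner (G (A + t • D) - G A) D := by
        rw [hc, comm (G (A + t • D)) D, comm (G A) D, ← sub_right D, comm]
      have h2 : frobInner (G (A + t • D) - G A) D ≤
          frobNorm (G (A + t • D) - G A) * frobNorm D := cauchy _ _
      have h3 : frobNorm (G (A + t • D) - G A) ≤ 2 * β * frobNorm (A + t • D - A) :=
        hLip A (A + t • D)
      have h4 : A + t • D - A = t • D := add_sub_cancel_left A (t • D)
      rw [h4, norm_smul, abs_of_pos ht.1] at h3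
      have h5 : frobNorm (G (A + t • D) - G A) * frobNorm D ≤
          (2 * β * (t * frobNorm D)) * frobNorm D :=
        mul_le_mul_of_nonneg_right h3 (norm_nonneg D)
      have h6 : (2 * β * (t * frobNorm D)) * frobNorm D = 2 * β * t * N := by
        rw [hNdef, ← norm_mul_self D]; ring
      rw [h1]
      linarith
    nlinarith [hN0, ht.1.le]
  have hanti := antitoneOn_of_deriv_nonpos (convex_Icc 0 1) hcont hdiff hderiv_nonpos
  have h01 := hanti (Set.mem_Icc.mpr ⟨le_refl 0, zero_le_one⟩)
      (Set.mem_Icc.mpr ⟨zero_le_one, le_refl 1⟩) zero_le_one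
  have hF0 : F 0 = g A := by simp [hF]
  have hF1 : F 1 = g (A + D) - c - β * N := by simp [hF]
  rw [hF0, hF1] at h01
  linarith

end frobAux

set_option maxHeartbeats 1000000 in
/-- Low-rank step progress.  Let g be differentiable with gradient G that is
    2β-Lipschitz in Frobenius norm, A = Σⱼ λⱼ uⱼvⱼᵀ an SVD of a rank-r' matrix
    with Π_{im(U)} G(A) Π_{im(V)} = O.  Let σ = ‖G(A)‖₂ be the spectral norm,
    attained by unit vectors p, q (so σ·pqᵀ = H₁(G(A)) is the top singular
    component), let j minimize λ, and
    A' = A - (2β)⁻¹·H₁(G(A)) - λⱼuⱼvⱼᵀ.  Then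
    g(A') - g(A) ≤ -(8β)⁻¹σ² + 2βλⱼ². -/
theorem low_rank_step_progress (m n r' : ℕ) (β : ℝ) (hβ : 0 < β)
    (g : Matrix (Fin m) (Fin n) ℝ → ℝ)
    (G : Matrix (Fin m) (Fin n) ℝ → Matrix (Fin m) (Fin n) ℝ)
    (hgrad : ∀ (A B : Matrix (Fin m) (Fin n) ℝ) (t : ℝ),
      HasDerivAt (fun s : ℝ => g (A + s • B)) (frobInner (G (A + t • B)) B) t)
    (hLip : ∀ A A' : Matrix (Fin m) (Fin n) ℝ,
      frobNorm (G A' - G A) ≤ 2 * β * frobNorm (A' - A))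
    (A : Matrix (Fin m) (Fin n) ℝ)
    (lam : Fin r' → ℝ) (u : Fin r' → Fin m → ℝ) (v : Fin r' → Fin n → ℝ)
    (hA : A = ∑ j, lam j • Matrix.vecMulVec (u j) (v j))
    (hu : ∀ j k, u j ⬝ᵥ u k = if j = k then (1 : ℝ) else 0)
    (hv : ∀ j k, v j ⬝ᵥ v k = if j = k then (1 : ℝ) else 0)
    (hlam : ∀ j, 0 < lam j)
    (hproj : ∀ j k, u j ⬝ᵥ (G A).mulVec (v k) = 0)
    (σ : ℝ) (p : Fin m → ℝ) (q : Fin n → ℝ)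
    (hp : p ⬝ᵥ p = 1) (hq : q ⬝ᵥ q = 1)
    (hσ : frobInner (G A) (Matrix.vecMulVec p q) = σ)
    (hσtop : ∀ (p' : Fin m → ℝ) (q' : Fin n → ℝ), p' ⬝ᵥ p' = 1 → q' ⬝ᵥ q' = 1 →
      frobInner (G A) (Matrix.vecMulVec p' q') ≤ σ)
    (j : Fin r') (hj : ∀ k, lam j ≤ lam k)
    (A' : Matrix (Fin m) (Fin n) ℝ)
    (hA' : A' = A - (2 * β)⁻¹ • (σ • Matrix.vecMulVec p q)
        - lam j • Matrix.vecMulVec (u j) (v j)) :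
    g A' - g A ≤ -(8 * β)⁻¹ * σ ^ 2 + 2 * β * lam j ^ 2 := by
  classical
  -- dot product form of hσ
  have hσ' : p ⬝ᵥ (G A *ᵥ q) = σ := by rw [← frobAux.vecMulVec_right]; exact hσ
  -- operator norm bound
  have hop : ∀ (x : Fin m → ℝ) (y : Fin n → ℝ),
      x ⬝ᵥ (G A *ᵥ y) ≤ σ * (Real.sqrt (x ⬝ᵥ x) * Real.sqrt (y ⬝ᵥ y)) := by
    intro x y
    by_cases hx : x ⬝ᵥ x = 0
    · have hx0 : x = 0 := dotProduct_self_eq_zero.mp hx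
      simp [hx0]
    by_cases hy : y ⬝ᵥ y = 0
    · have hy0 : y = 0 := dotProduct_self_eq_zero.mp hy
      simp [hy0]
    have hx0 : 0 < x ⬝ᵥ x :=
      lt_of_le_of_ne (Finset.sum_nonneg fun i _ => mul_self_nonneg _) (Ne.symm hx)
    have hy0 : 0 < y ⬝ᵥ y :=
      lt_of_le_of_ne (Finset.sum_nonneg fun i _ => mul_self_nonneg _) (Ne.symm hy)
    set a : ℝ := Real.sqrt (x ⬝ᵥ x) with ha
    set b : ℝ := Real.sqrt (y ⬝ᵥ y) with hb
    have ha0 : 0 < a := Real.sqrt_pos.mpr hx0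
    have hb0 : 0 < b := Real.sqrt_pos.mpr hy0
    have haa : a * a = x ⬝ᵥ x := Real.mul_self_sqrt hx0.le
    have hbb : b * b = y ⬝ᵥ y := Real.mul_self_sqrt hy0.le
    have hxn : (a⁻¹ • x) ⬝ᵥ (a⁻¹ • x) = 1 := by
      rw [smul_dotProduct, dotProduct_smul, smul_eq_mul, smul_eq_mul, ← haa]
      field_simp
    have hyn : (b⁻¹ • y) ⬝ᵥ (b⁻¹ • y) = 1 := by
      rw [smul_dotProduct, dotProduct_smul, smul_eq_mul, smul_eq_mul, ← hbb]
      field_simp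
    have htop := hσtop _ _ hxn hyn
    rw [frobAux.vecMulVec_right] at htop
    rw [Matrix.mulVec_smul, smul_dotProduct, dotProduct_smul, smul_eq_mul, smul_eq_mul] at htop
    have hrw : x ⬝ᵥ (G A *ᵥ y) = a * b * (a⁻¹ * (b⁻¹ * (x ⬝ᵥ (G A *ᵥ y)))) := by
      field_simp
    rw [hrw]
    calc a * b * (a⁻¹ * (b⁻¹ * (x ⬝ᵥ (G A *ᵥ y)))) ≤ a * b * σ :=
          mul_le_mul_of_nonneg_left htop (by positivity)
      _ = σ * (a * b) := by ring
  have hσ0 : 0 ≤ σ := by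
    have h1 := hop p (-q)
    rw [Matrix.mulVec_neg, dotProduct_neg, hσ', neg_dotProduct, dotProduct_neg, neg_neg,
      hp, hq, Real.sqrt_one] at h1
    nlinarith [h1]
  -- w := G A *ᵥ q equals σ • p
  have hww : (G A *ᵥ q) ⬝ᵥ (G A *ᵥ q) ≤ σ * σ := by
    have h1 := hop (G A *ᵥ q) q
    rw [hq, Real.sqrt_one, mul_one] at h1
    set s : ℝ := Real.sqrt ((G A *ᵥ q) ⬝ᵥ (G A *ᵥ q)) with hs
    have hs0 : 0 ≤ s := Real.sqrt_nonneg _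
    have hss : s * s = (G A *ᵥ q) ⬝ᵥ (G A *ᵥ q) :=
      Real.mul_self_sqrt (Finset.sum_nonneg fun i _ => mul_self_nonneg _)
    nlinarith [sq_nonneg (s - σ)]
  have hwp : G A *ᵥ q = σ • p := by
    have hexp : (G A *ᵥ q - σ • p) ⬝ᵥ (G A *ᵥ q - σ • p)
        = (G A *ᵥ q) ⬝ᵥ (G A *ᵥ q) - σ * σ := by
      simp only [sub_dotProduct, dotProduct_sub, smul_dotProduct, dotProduct_smul,
        smul_eq_mul, hp, dotProduct_comm (G A *ᵥ q) p, hσ']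
      ring
    have hge : 0 ≤ (G A *ᵥ q - σ • p) ⬝ᵥ (G A *ᵥ q - σ • p) :=
      Finset.sum_nonneg fun i _ => mul_self_nonneg _
    have h0 : (G A *ᵥ q - σ • p) ⬝ᵥ (G A *ᵥ q - σ • p) = 0 :=
      le_antisymm (by rw [hexp]; linarith) hge
    have h1 := dotProduct_self_eq_zero.mp h0
    rwa [sub_eq_zero] at h1
  -- cross term bound
  obtain ⟨t, htdef⟩ : ∃ t : ℝ, t = q ⬝ᵥ v j := ⟨_, rfl⟩
  obtain ⟨e, hedef⟩ : ∃ e : ℝ, e = u j ⬝ᵥ (G A *ᵥ q) := ⟨_, rfl⟩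
  have huu : u j ⬝ᵥ u j = 1 := by simpa using hu j j
  have hvv : v j ⬝ᵥ v j = 1 := by simpa using hv j j
  have hq'q' : (q - t • v j) ⬝ᵥ (q - t • v j) = 1 - t ^ 2 := by
    simp only [sub_dotProduct, dotProduct_sub, smul_dotProduct, dotProduct_smul,
      smul_eq_mul, hq, hvv, dotProduct_comm (v j) q, ← htdef]
    ring
  have hq'nn : 0 ≤ 1 - t ^ 2 := by
    rw [← hq'q']; exact Finset.sum_nonneg fun i _ => mul_self_nonneg _
  have he' : u j ⬝ᵥ (G A *ᵥ (q - t • v j)) = e := by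
    rw [Matrix.mulVec_sub, dotProduct_sub, Matrix.mulVec_smul, dotProduct_smul,
      smul_eq_mul, hproj j j, hedef]
    ring
  obtain ⟨s, hsdef⟩ : ∃ s : ℝ, s = Real.sqrt (1 - t ^ 2) := ⟨_, rfl⟩
  have hs0 : 0 ≤ s := hsdef ▸ Real.sqrt_nonneg _
  have hss : s * s = 1 - t ^ 2 := by rw [hsdef]; exact Real.mul_self_sqrt hq'nn
  have hb1 : e ≤ σ * s := by
    have h1 := hop (u j) (q - t • v j)
    rw [he', huu, Real.sqrt_one, one_mul, hq'q', ← hsdef] at h1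
    exact h1
  have hb2 : -(σ * s) ≤ e := by
    have h1 := hop (-(u j)) (q - t • v j)
    rw [neg_dotProduct, he', neg_dotProduct, dotProduct_neg, neg_neg, huu,
      Real.sqrt_one, one_mul, hq'q', ← hsdef] at h1
    linarith
  have hcross : e * t ≤ σ / 2 := by
    rcases le_total 0 t with ht | ht
    · nlinarith [mul_le_mul_of_nonneg_right hb1 ht, mul_nonneg hσ0 (sq_nonneg (s - t))]
    · nlinarith [mul_le_mul_of_nonneg_right hb2 (neg_nonneg.mpr ht),
        mul_nonneg hσ0 (sq_nonneg (s + t))]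
  -- the step
  have hlj0 : 0 < lam j := hlam j
  have hDval : A' - A = (-((2 * β)⁻¹ * σ)) • Matrix.vecMulVec p q
      + (-lam j) • Matrix.vecMulVec (u j) (v j) := by
    rw [hA']; module
  have hMQ : frobInner (G A) (Matrix.vecMulVec (u j) (v j)) = 0 := by
    rw [frobAux.vecMulVec_right]
    exact hproj j j
  have hPP : frobInner (Matrix.vecMulVec p q) (Matrix.vecMulVec p q) = 1 := by
    rw [frobAux.vecMulVec_pair, hp, hq]; ring
  have hQQ : frobInner (Matrix.vecMulVec (u j) (v j)) (Matrix.vecMulVec (u j) (v j)) = 1 := by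
    rw [frobAux.vecMulVec_pair, huu, hvv]; ring
  have hPQ : frobInner (Matrix.vecMulVec p q) (Matrix.vecMulVec (u j) (v j))
      = (p ⬝ᵥ u j) * t := by
    rw [frobAux.vecMulVec_pair, htdef]
  have hQP : frobInner (Matrix.vecMulVec (u j) (v j)) (Matrix.vecMulVec p q)
      = (p ⬝ᵥ u j) * t := by
    rw [frobAux.comm]; exact hPQ
  have hpu : σ * (p ⬝ᵥ u j) = e := by
    rw [hedef, hwp, dotProduct_smul, smul_eq_mul, dotProduct_comm (u j) p]
  have hI : frobInner (G A) (A' - A) = -((2 * β)⁻¹ * σ * σ) := by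
    rw [hDval, frobAux.add_right, frobAux.smul_right, frobAux.smul_right, hσ, hMQ]
    ring
  have hN : frobInner (A' - A) (A' - A) =
      ((2 * β)⁻¹ * σ) ^ 2 + lam j ^ 2
        + 2 * ((2 * β)⁻¹ * σ) * lam j * ((p ⬝ᵥ u j) * t) := by
    rw [hDval, frobAux.inner_expand, hPP, hQQ, hPQ]
    ring
  have hdes := frobAux.descent hβ g G hgrad hLip A (A' - A)
  have hAD : A + (A' - A) = A' := by abel
  rw [hAD, hI, hN] at hdes
  -- final arithmetic
  have hXbound : lam j * (σ * ((p ⬝ᵥ u j) * t)) ≤ lam j * (σ / 2) := by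
    apply mul_le_mul_of_nonneg_left _ hlj0.le
    calc σ * ((p ⬝ᵥ u j) * t) = e * t := by rw [← hpu]; ring
      _ ≤ σ / 2 := hcross
  have key : -((2 * β)⁻¹ * σ * σ) + β * (((2 * β)⁻¹ * σ) ^ 2 + lam j ^ 2
        + 2 * ((2 * β)⁻¹ * σ) * lam j * ((p ⬝ᵥ u j) * t))
      ≤ -(8 * β)⁻¹ * σ ^ 2 + 2 * β * lam j ^ 2 := by
    have hβ' : (β : ℝ) ≠ 0 := ne_of_gt hβ
    rw [← sub_nonneg]
    have expand : (-(8 * β)⁻¹ * σ ^ 2 + 2 * β * lam j ^ 2) - (-((2 * β)⁻¹ * σ * σ)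
          + β * (((2 * β)⁻¹ * σ) ^ 2 + lam j ^ 2
            + 2 * ((2 * β)⁻¹ * σ) * lam j * ((p ⬝ᵥ u j) * t)))
        = (σ ^ 2 + 8 * β ^ 2 * lam j ^ 2
            - 8 * β * (lam j * (σ * ((p ⬝ᵥ u j) * t)))) / (8 * β) := by
      field_simp
      ring
    rw [expand]
    apply div_nonneg _ (by linarith)
    have h4 : 8 * β * (lam j * (σ * ((p ⬝ᵥ u j) * t))) ≤ 8 * β * (lam j * (σ / 2)) :=
      mul_le_mul_of_nonneg_left hXbound (by linarith)
    nlinarith [sq_nonneg (σ - 2 * β * lam j), sq_nonneg (β * lam j)]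
  linarith
end
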